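/- Let I be an f-ideal in R = k[x_1,…,x_n] and let ω = ω(I). Then dim δ_F(I) = dim δ_N(I) = ω − 1 ≤ n − 2. -/

import Mathlib

/-!
Encoding: a squarefree monomial of `k[x₁,…,xₙ]` is encoded by its support, a
`Finset (Fin n)` (the monomial `∏ i ∈ T, xᵢ` corresponds to `T`); its degree is
`T.card`, and divisibility of squarefree monomials is inclusion of supports.
A squarefree monomial ideal `I` is encoded by the antichain
`G : Finset (Finset (Fin n))` of supports of its unique minimal set of monomial
generators `G(I)`; the squarefree monomial with support `T` lies in `I` iff
`S ⊆ T` for some `S ∈ G`.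
-/

open Finset

/-- The squarefree monomial with support `T` belongs to the squarefree monomial
ideal with minimal generating supports `G`. -/
def memIdeal {n : ℕ} (G : Finset (Finset (Fin n))) (T : Finset (Fin n)) : Prop :=
  ∃ S ∈ G, S ⊆ T

/-- The Newton complementary dual `Î = ⟨(x₁⋯xₙ)/m : m ∈ G(I)⟩`: each minimal
generator support `S` is replaced by its complement `Sᶜ`, the support of
`(x₁⋯xₙ)/(∏ i ∈ S, xᵢ)`. -/
def ncDual {n : ℕ} (G : Finset (Finset (Fin n))) : Finset (Finset (Fin n)) :=
  G.image fun S => Sᶜ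

/-- `faceN G d` is the number of faces of cardinality `d` (i.e. of dimension
`d - 1`) of the non-face (Stanley–Reisner) complex `δ_N(I)`, whose faces are the
supports of squarefree monomials not in `I`.  Thus `faceN G (j + 1)` is the
f-vector entry `f_j(δ_N(I))`, and trailing entries are `0`. -/
noncomputable def faceN {n : ℕ} (G : Finset (Finset (Fin n))) (d : ℕ) : ℕ :=
  Nat.card {T : Finset (Fin n) | T.card = d ∧ ¬ memIdeal G T}

/-- `faceF G d` is the number of faces of cardinality `d` (i.e. of dimension
`d - 1`) of the facet complex `δ_F(I)`, whose faces are the subsets of the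
supports of the minimal generators.  Thus `faceF G (j + 1)` is the f-vector
entry `f_j(δ_F(I))`, and trailing entries are `0`. -/
noncomputable def faceF {n : ℕ} (G : Finset (Finset (Fin n))) (d : ℕ) : ℕ :=
  Nat.card {T : Finset (Fin n) | T.card = d ∧ ∃ S ∈ G, T ⊆ S}

/-- `I` is an f-ideal iff `δ_N(I)` and `δ_F(I)` have the same f-vector. -/
def IsFIdeal {n : ℕ} (G : Finset (Finset (Fin n))) : Prop :=
  ∀ d : ℕ, faceN G d = faceF G d

/-- `α(I)`, the minimal degree of a minimal generator of `I`. -/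
noncomputable def alphaI {n : ℕ} (G : Finset (Finset (Fin n))) : ℕ :=
  sInf (Finset.card '' (G : Set (Finset (Fin n))))

/-- `ω(I)`, the maximal degree of a minimal generator of `I`. -/
noncomputable def omegaI {n : ℕ} (G : Finset (Finset (Fin n))) : ℕ :=
  sSup (Finset.card '' (G : Set (Finset (Fin n))))

/-- The dimension of the facet complex `δ_F(I)`: the maximum dimension `d`
(= cardinality minus one) of a face. -/
noncomputable def dimF {n : ℕ} (G : Finset (Finset (Fin n))) : ℕ :=
  sSup {d : ℕ | 0 < faceF G (d + 1)}

/-- The dimension of the non-face complex `δ_N(I)`: the maximum dimension `d`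
(= cardinality minus one) of a face. -/
noncomputable def dimN {n : ℕ} (G : Finset (Finset (Fin n))) : ℕ :=
  sSup {d : ℕ | 0 < faceN G (d + 1)}

lemma faceN_pos_iff {n : ℕ} (G : Finset (Finset (Fin n))) (d : ℕ) :
    0 < faceN G d ↔ ∃ T : Finset (Fin n), T.card = d ∧ ¬ memIdeal G T := by
  rw [faceN, Nat.card_pos_iff]
  constructor
  · rintro ⟨⟨⟨T, hT⟩⟩, -⟩; exact ⟨T, hT⟩
  · rintro ⟨T, hT⟩; exact ⟨⟨⟨T, hT⟩⟩, inferInstance⟩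

lemma faceF_pos_iff {n : ℕ} (G : Finset (Finset (Fin n))) (d : ℕ) :
    0 < faceF G d ↔ ∃ T : Finset (Fin n), T.card = d ∧ ∃ S ∈ G, T ⊆ S := by
  rw [faceF, Nat.card_pos_iff]
  constructor
  · rintro ⟨⟨⟨T, hT⟩⟩, -⟩; exact ⟨T, hT⟩
  · rintro ⟨T, hT⟩; exact ⟨⟨⟨T, hT⟩⟩, inferInstance⟩

/-- If `I` is an f-ideal and `ω = ω(I)`, then
`dim δ_F(I) = dim δ_N(I) = ω - 1 ≤ n - 2`. -/
theorem dim_facet_eq_dim_nonface {n : ℕ} (G : Finset (Finset (Fin n)))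
    (hG : IsAntichain (· ⊆ ·) (G : Set (Finset (Fin n))))
    (hne : G.Nonempty) (hf : IsFIdeal G) :
    dimF G = omegaI G - 1 ∧ dimN G = omegaI G - 1 ∧ omegaI G - 1 ≤ n - 2 := by
  set ω := omegaI G with hωdef
  have hbdd : BddAbove (Finset.card '' (G : Set (Finset (Fin n)))) :=
    ((G : Set (Finset (Fin n))).toFinite.image _).bddAbove
  have hmem : ω ∈ Finset.card '' (G : Set (Finset (Fin n))) :=
    Nat.sSup_mem ((Finset.coe_nonempty.2 hne).image _) hbdd
  obtain ⟨S, hS, hScard⟩ := hmem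
  rw [Finset.mem_coe] at hS
  have hle : ∀ S' ∈ G, S'.card ≤ ω := fun S' hS' => le_csSup hbdd ⟨S', hS', rfl⟩
  -- `ω ≥ 1`
  have h0F : 0 < faceF G 0 :=
    (faceF_pos_iff G 0).2 ⟨∅, Finset.card_empty, S, hS, Finset.empty_subset S⟩
  have h0N : 0 < faceN G 0 := by rw [hf 0]; exact h0F
  obtain ⟨T, hT0, hTni⟩ := (faceN_pos_iff G 0).1 h0N
  have hSe : S ≠ ∅ := by
    rintro rfl; exact hTni ⟨∅, hS, Finset.empty_subset T⟩
  have hω1 : 1 ≤ ω :=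
    hScard ▸ Finset.card_pos.2 (Finset.nonempty_iff_ne_empty.2 hSe)
  -- `ω < n`
  have hωn : ω < n := by
    by_contra h
    push_neg at h
    have hSn : S.card = n := le_antisymm (le_trans (Finset.card_le_univ S) (by simp))
      (le_trans h (le_of_eq hScard.symm))
    have hSuniv : S = Finset.univ := Finset.eq_univ_of_card S (by simp [hSn])
    have hFn : 0 < faceF G n :=
      (faceF_pos_iff G n).2 ⟨Finset.univ, by simp, S, hS, by rw [hSuniv]⟩
    rw [← hf n] at hFn
    obtain ⟨T', hTn', hTni'⟩ := (faceN_pos_iff G n).1 hFn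
    have hT'univ : T' = Finset.univ := Finset.eq_univ_of_card T' (by simpa using hTn')
    exact hTni' ⟨S, hS, by rw [hSuniv, hT'univ]⟩
  -- identify the face-dimension sets
  have hFset : {d : ℕ | 0 < faceF G (d + 1)} = Set.Iic (ω - 1) := by
    ext d
    simp only [Set.mem_setOf_eq, Set.mem_Iic, faceF_pos_iff]
    constructor
    · rintro ⟨T', hTc, S', hS', hTS⟩
      have h1 : T'.card ≤ S'.card := Finset.card_le_card hTS
      have h2 := hle S' hS'
      omega
    · intro hd
      obtain ⟨T', hTS, hTc⟩ := Finset.exists_subset_card_eq (s := S) (n := d + 1) (by omega)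
      exact ⟨T', hTc, S, hS, hTS⟩
  have hNset : {d : ℕ | 0 < faceN G (d + 1)} = {d : ℕ | 0 < faceF G (d + 1)} := by
    ext d; simp [hf (d + 1)]
  refine ⟨?_, ?_, by omega⟩
  · rw [dimF, hFset, csSup_Iic]
  · rw [dimN, hNset, hFset, csSup_Iic]
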